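/- Let λ, μ ∈ k. The linear map φ_λ : H(X,Ω) → H(X,Ω) defined on forests by φ_λ(F) = λ^{d_X(F)} F, where d_X(F) is the number of leaves of F decorated by an element of X, is a bialgebra morphism from (H(X,Ω), m, 1, Δ_μ, ε) to (H(X,Ω), m, 1, Δ_{λμ}, ε); moreover φ_λ ∘ B⁺_ω = B⁺_ω ∘ φ_λ for all ω ∈ Ω. -/

import Mathlib

open scoped TensorProduct

universe u v w u'

/-- Decorated planar rooted trees: internal vertices are decorated by `Ω`,
leaves are decorated by `X ⊔ Ω` (a leaf decorated by `ω : Ω` is `node ω []`). -/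
inductive PTree (X : Type u) (Ω : Type v) : Type (max u v)
  | leafX : X → PTree X Ω
  | node : Ω → List (PTree X Ω) → PTree X Ω

namespace Moerdijk

variable {X : Type u} {Ω : Type v}

/-- `ℱ(X,Ω)`: decorated planar rooted forests, i.e. the free monoid on decorated
planar rooted trees under concatenation. -/
abbrev RForest (X : Type u) (Ω : Type v) := FreeMonoid (PTree X Ω)

/-- The single-vertex forest `•ₓ` for `x ∈ X`. -/
def leafF (x : X) : RForest X Ω := FreeMonoid.of (PTree.leafX x)

/-- Grafting of a forest onto a new common root decorated by `ω`. -/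
def graft (ω : Ω) (F : RForest X Ω) : RForest X Ω :=
  FreeMonoid.of (PTree.node ω (FreeMonoid.toList F))

variable (k : Type w) [CommRing k]

/-- `H(X,Ω)`: the free `k`-module on decorated planar rooted forests, a unital
associative algebra under the concatenation product. -/
abbrev RAlg (X : Type u) (Ω : Type v) := MonoidAlgebra k (RForest X Ω)

/-- The basis element of `H(X,Ω)` corresponding to a forest `F`. -/
noncomputable def ofF (F : RForest X Ω) : RAlg k X Ω := MonoidAlgebra.of k (RForest X Ω) F

/-- The grafting operator `B⁺_ω : H(X,Ω) → H(X,Ω)` as a linear map. -/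
noncomputable def Bplus (ω : Ω) : RAlg k X Ω →ₗ[k] RAlg k X Ω :=
  (MonoidAlgebra.coeffLinearEquiv k).symm.toLinearMap ∘ₗ Finsupp.lmapDomain k k (graft ω) ∘ₗ
    (MonoidAlgebra.coeffLinearEquiv k).toLinearMap

/-- The value of the coproduct `Δ_λ` on a decorated planar rooted tree:
`Δ_λ(•ₓ) = •ₓ ⊗ 1 + 1 ⊗ •ₓ + λ •ₓ ⊗ •ₓ` and
`Δ_λ(B⁺_ω(F)) = (B⁺_ω ⊗ id)Δ_λ(F) + (id ⊗ B⁺_ω)Δ_λ(F)`. -/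
noncomputable def DeltaT (lam : k) : PTree X Ω → (RAlg k X Ω ⊗[k] RAlg k X Ω)
  | .leafX x =>
      ofF k (leafF x) ⊗ₜ[k] 1 + 1 ⊗ₜ[k] ofF k (leafF x)
        + lam • (ofF k (leafF x) ⊗ₜ[k] ofF k (leafF x))
  | .node ω ts =>
      ((TensorProduct.map (Bplus k ω) LinearMap.id
        + TensorProduct.map LinearMap.id (Bplus k ω) :
          (RAlg k X Ω ⊗[k] RAlg k X Ω) →ₗ[k] (RAlg k X Ω ⊗[k] RAlg k X Ω)))
        ((ts.attach.map fun t => DeltaT lam t.1).prod)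
decreasing_by
  have := List.sizeOf_lt_of_mem t.2
  simp only [PTree.node.sizeOf_spec]
  omega

/-- The value of the coproduct `Δ_λ` on a forest: `Δ_λ(T₁⋯Tₘ) = Δ_λ(T₁)⋯Δ_λ(Tₘ)`. -/
noncomputable def DeltaF (lam : k) (F : RForest X Ω) : RAlg k X Ω ⊗[k] RAlg k X Ω :=
  ((FreeMonoid.toList F).map (DeltaT k lam)).prod

/-- The coproduct `Δ_λ : H(X,Ω) → H(X,Ω) ⊗ H(X,Ω)`. -/
noncomputable def Delta (lam : k) : RAlg k X Ω →ₗ[k] (RAlg k X Ω ⊗[k] RAlg k X Ω) :=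
  (Finsupp.lsum k fun F => LinearMap.toSpanSingleton k _ (DeltaF k lam F)) ∘ₗ
    (MonoidAlgebra.coeffLinearEquiv k).toLinearMap

/-- The counit `ε : H(X,Ω) → k`, sending the empty forest to `1` and every
nonempty forest to `0`. -/
noncomputable def eps : RAlg k X Ω →ₗ[k] k :=
  (Finsupp.lsum k fun F => LinearMap.toSpanSingleton k k
    (if (FreeMonoid.toList F).isEmpty then (1 : k) else 0)) ∘ₗ
    (MonoidAlgebra.coeffLinearEquiv k).toLinearMap

/-- The number of leaves of a tree decorated by an element of `X`. -/
def dXT : PTree X Ω → ℕ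
  | .leafX _ => 1
  | .node _ ts => ((ts.attach.map fun t => dXT t.1)).sum
decreasing_by
  have := List.sizeOf_lt_of_mem t.2
  simp only [PTree.node.sizeOf_spec]
  omega

/-- `d_X(F)`: the number of leaves of a forest `F` decorated by an element of `X`. -/
def dXF (F : RForest X Ω) : ℕ := ((FreeMonoid.toList F).map dXT).sum

/-- The linear map `φ_λ : H(X,Ω) → H(X,Ω)` defined on forests by
`φ_λ(F) = λ^{d_X(F)} F`. -/
noncomputable def phiMap (lam : k) : RAlg k X Ω →ₗ[k] RAlg k X Ω :=
  (Finsupp.lsum k fun F => LinearMap.toSpanSingleton k _ ((lam ^ dXF F) • ofF k F)) ∘ₗ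
    (MonoidAlgebra.coeffLinearEquiv k).toLinearMap


section Aux

variable {k : Type w} [CommRing k] {lam mu : k}

lemma dXT_node (ω : Ω) (ts : List (PTree X Ω)) :
    dXT (PTree.node ω ts) = (ts.map dXT).sum := by
  rw [dXT, List.attach_map_val]

lemma dXF_one : dXF (1 : RForest X Ω) = 0 := rfl

lemma dXF_mul (F G : RForest X Ω) : dXF (F * G) = dXF F + dXF G := by
  simp [dXF]

lemma dXF_graft (ω : Ω) (F : RForest X Ω) : dXF (graft ω F) = dXF F := by
  simp [dXF, graft, dXT_node]

lemma phiMap_ofF (lam : k) (F : RForest X Ω) :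
    phiMap k lam (ofF k F) = lam ^ dXF F • ofF k F := by
  show Finsupp.lsum k (fun F => LinearMap.toSpanSingleton k _ ((lam ^ dXF F) • ofF k F))
    (Finsupp.single F 1) = lam ^ dXF F • ofF k F
  rw [Finsupp.lsum_single, LinearMap.toSpanSingleton_apply, one_smul]

/-- `φ_λ` as a monoid hom on forests. -/
noncomputable def phiMon (lam : k) : RForest X Ω →* RAlg k X Ω where
  toFun F := lam ^ dXF F • ofF k F
  map_one' := by simp [dXF_one, ofF]; rfl
  map_mul' F G := by
    simp only [dXF_mul, pow_add, ofF, map_mul, mul_smul, smul_mul_assoc, mul_smul_comm,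
      smul_comm (lam ^ dXF G) (lam ^ dXF F)]

/-- `φ_λ` as an algebra hom. -/
noncomputable def phiAlg (lam : k) : RAlg k X Ω →ₐ[k] RAlg k X Ω :=
  MonoidAlgebra.lift k (RAlg k X Ω) (RForest X Ω) (phiMon lam)

lemma phiAlg_toLinearMap (lam : k) :
    (phiAlg (X := X) (Ω := Ω) lam).toLinearMap = phiMap k lam := by
  apply MonoidAlgebra.lhom_ext'
  intro F
  apply LinearMap.ext_ring
  show phiAlg lam (ofF k F) = phiMap k lam (ofF k F)
  rw [phiMap_ofF]
  simp [phiAlg, phiMon, ofF, MonoidAlgebra.of_apply, MonoidAlgebra.lift_single]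

lemma phiAlg_apply (lam : k) (x : RAlg k X Ω) : phiAlg lam x = phiMap k lam x := by
  rw [← phiAlg_toLinearMap]; rfl

lemma phiMap_mul (lam : k) (x y : RAlg k X Ω) :
    phiMap k lam (x * y) = phiMap k lam x * phiMap k lam y := by
  simp only [← phiAlg_apply, map_mul]

lemma phiMap_one (lam : k) : phiMap k lam (1 : RAlg k X Ω) = 1 := by
  simp only [← phiAlg_apply, map_one]

lemma Bplus_ofF (ω : Ω) (F : RForest X Ω) :
    Bplus k ω (ofF k F) = ofF k (graft ω F) := by
  show (MonoidAlgebra.coeffLinearEquiv k).symm (Finsupp.mapDomain (graft ω) (Finsupp.single F 1))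
    = (MonoidAlgebra.coeffLinearEquiv k).symm (Finsupp.single (graft ω F) 1)
  rw [Finsupp.mapDomain_single]

lemma phiMap_comp_Bplus (lam : k) (ω : Ω) :
    (phiMap k lam).comp (Bplus k (X := X) ω) = (Bplus k ω).comp (phiMap k lam) := by
  apply MonoidAlgebra.lhom_ext'
  intro F
  apply LinearMap.ext_ring
  show phiMap k lam (Bplus k ω (ofF k F)) = Bplus k ω (phiMap k lam (ofF k F))
  rw [Bplus_ofF, phiMap_ofF, phiMap_ofF, dXF_graft, map_smul, Bplus_ofF]

lemma phiMap_Bplus (lam : k) (ω : Ω) (x : RAlg k X Ω) :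
    phiMap k lam (Bplus k ω x) = Bplus k ω (phiMap k lam x) :=
  congrFun (congrArg DFunLike.coe (phiMap_comp_Bplus lam ω)) x

lemma Delta_ofF (lam : k) (F : RForest X Ω) :
    Delta k lam (ofF k F) = DeltaF k lam F := by
  show Finsupp.lsum k (fun F => LinearMap.toSpanSingleton k _ (DeltaF k lam F))
    (Finsupp.single F 1) = DeltaF k lam F
  rw [Finsupp.lsum_single, LinearMap.toSpanSingleton_apply, one_smul]

lemma eps_ofF (F : RForest X Ω) :
    eps k (ofF k F) = if (FreeMonoid.toList F).isEmpty then (1 : k) else 0 := by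
  show Finsupp.lsum k (fun F => LinearMap.toSpanSingleton k k
      (if (FreeMonoid.toList F).isEmpty then (1 : k) else 0)) (Finsupp.single F 1) = _
  rw [Finsupp.lsum_single, LinearMap.toSpanSingleton_apply, one_smul]

/-- `φ_λ ⊗ φ_λ` as an algebra hom. -/
noncomputable def phi2Alg (lam : k) :
    (RAlg k X Ω ⊗[k] RAlg k X Ω) →ₐ[k] (RAlg k X Ω ⊗[k] RAlg k X Ω) :=
  Algebra.TensorProduct.map (phiAlg lam) (phiAlg lam)

lemma phi2Alg_apply (lam : k) (z : RAlg k X Ω ⊗[k] RAlg k X Ω) :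
    phi2Alg lam z = TensorProduct.map (phiMap k lam) (phiMap k lam) z := by
  have : (phi2Alg (X := X) (Ω := Ω) lam).toLinearMap
      = TensorProduct.map (phiMap k lam) (phiMap k lam) := by
    apply TensorProduct.ext'
    intro a b
    simp [phi2Alg, phiAlg_apply]
  exact congrFun (congrArg DFunLike.coe this) z

/-- the map `B⁺_ω ⊗ id + id ⊗ B⁺_ω`. -/
noncomputable def BB (ω : Ω) :
    (RAlg k X Ω ⊗[k] RAlg k X Ω) →ₗ[k] (RAlg k X Ω ⊗[k] RAlg k X Ω) :=
  TensorProduct.map (Bplus k ω) LinearMap.id + TensorProduct.map LinearMap.id (Bplus k ω)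

lemma phi2_comm_BB (lam : k) (ω : Ω) (z : RAlg k X Ω ⊗[k] RAlg k X Ω) :
    TensorProduct.map (phiMap k lam) (phiMap k lam) (BB (k := k) ω z)
      = BB (k := k) ω (TensorProduct.map (phiMap k lam) (phiMap k lam) z) := by
  have h : (TensorProduct.map (phiMap k lam) (phiMap k lam)).comp (BB (k := k) (X := X) ω)
      = (BB (k := k) ω).comp (TensorProduct.map (phiMap k lam) (phiMap k lam)) := by
    simp only [BB, LinearMap.comp_add, LinearMap.add_comp, ← TensorProduct.map_comp,
      phiMap_comp_Bplus, LinearMap.comp_id, LinearMap.id_comp]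
  exact congrFun (congrArg DFunLike.coe h) z

/-- Key computation on trees. -/
lemma phi2_DeltaT (lam mu : k) : ∀ T : PTree X Ω,
    TensorProduct.map (phiMap k lam) (phiMap k lam) (DeltaT k mu T)
      = lam ^ dXT T • DeltaT k (lam * mu) T
  | .leafX x => by
    simp only [DeltaT, dXT, pow_one, map_add, map_smul, TensorProduct.map_tmul,
      phiMap_ofF, phiMap_one]
    simp only [dXF, leafF, FreeMonoid.toList_of, List.map_cons, List.map_nil, dXT,
      List.sum_cons, List.sum_nil, pow_one]
    simp only [TensorProduct.smul_tmul', TensorProduct.tmul_smul, smul_add, smul_smul]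
    ring_nf
  | .node ω ts => by
    have ih : ∀ t ∈ ts, TensorProduct.map (phiMap k lam) (phiMap k lam) (DeltaT k mu t)
        = lam ^ dXT t • DeltaT k (lam * mu) t := fun t _ => phi2_DeltaT lam mu t
    rw [DeltaT, DeltaT, dXT_node]
    rw [List.attach_map_val, List.attach_map_val]
    show TensorProduct.map (phiMap k lam) (phiMap k lam)
        (BB (k := k) ω ((ts.map (DeltaT k mu)).prod)) = _
    rw [phi2_comm_BB]
    rw [← phi2Alg_apply, map_list_prod, List.map_map]
    have : (ts.map ((phi2Alg (X := X) (Ω := Ω) lam) ∘ DeltaT k mu)).prod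
        = lam ^ (ts.map dXT).sum • (ts.map (DeltaT k (lam * mu))).prod := by
      induction ts with
      | nil => simp
      | cons t ts iht =>
        simp only [List.map_cons, List.prod_cons, List.sum_cons, Function.comp_apply,
          phi2Alg_apply]
        rw [ih t List.mem_cons_self, iht (fun t ht => ih t (List.mem_cons_of_mem _ ht))]
        rw [smul_mul_smul_comm, pow_add]
    rw [this, map_smul]
    rfl
decreasing_by
  have := List.sizeOf_lt_of_mem ‹t ∈ ts›
  simp only [PTree.node.sizeOf_spec]
  omega

lemma phi2_DeltaF (lam mu : k) (F : RForest X Ω) :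
    TensorProduct.map (phiMap k lam) (phiMap k lam) (DeltaF k mu F)
      = lam ^ dXF F • DeltaF k (lam * mu) F := by
  rw [DeltaF, DeltaF, dXF, ← phi2Alg_apply, map_list_prod, List.map_map]
  induction (FreeMonoid.toList F) with
  | nil => simp
  | cons t ts iht =>
    simp only [List.map_cons, List.prod_cons, List.sum_cons, Function.comp_apply,
      phi2Alg_apply, phi2_DeltaT]
    rw [iht, smul_mul_smul_comm, pow_add]

end Aux

/-- `φ_λ` is a bialgebra morphism from `(H(X,Ω), m, 1, Δ_μ, ε)` to
`(H(X,Ω), m, 1, Δ_{λμ}, ε)`, and it commutes with the grafting operators. -/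
theorem phi_bialgebra_morphism [Nonempty Ω] (lam mu : k) :
    (∀ F : RForest X Ω, phiMap k lam (ofF k F) = lam ^ dXF F • ofF k F) ∧
    (∀ x y : RAlg k X Ω, phiMap k lam (x * y) = phiMap k lam x * phiMap k lam y) ∧
    (phiMap k lam (1 : RAlg k X Ω) = 1) ∧
    (∀ x : RAlg k X Ω, eps k (phiMap k lam x) = eps k x) ∧
    (∀ x : RAlg k X Ω, Delta k (lam * mu) (phiMap k lam x)
      = TensorProduct.map (phiMap k lam) (phiMap k lam) (Delta k mu x)) ∧
    (∀ (ω : Ω) (x : RAlg k X Ω), phiMap k lam (Bplus k ω x) = Bplus k ω (phiMap k lam x)) := by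
  refine ⟨phiMap_ofF lam, phiMap_mul lam, phiMap_one lam, ?_, ?_, phiMap_Bplus lam⟩
  · intro x
    have h : (eps k).comp (phiMap k (X := X) (Ω := Ω) lam) = eps k := by
      apply MonoidAlgebra.lhom_ext'
      intro F
      ext
      simp only [LinearMap.coe_comp, Function.comp_apply, LinearMap.comp_apply,
        LinearMap.toSpanSingleton_apply, one_smul]
      show eps k (phiMap k lam (ofF k F)) = eps k (ofF k F)
      rw [phiMap_ofF, map_smul, eps_ofF]
      rcases h : (FreeMonoid.toList F).isEmpty with _ | _
      · simp [h]
      · have : F = 1 := by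
          apply FreeMonoid.toList.injective
          rw [FreeMonoid.toList_one]
          exact List.isEmpty_iff.mp h
        subst this
        simp [dXF_one, eps_ofF]
    exact congrFun (congrArg DFunLike.coe h) x
  · intro x
    have h : (Delta k (lam * mu)).comp (phiMap k (X := X) (Ω := Ω) lam)
        = (TensorProduct.map (phiMap k lam) (phiMap k lam)).comp (Delta k mu) := by
      apply MonoidAlgebra.lhom_ext'
      intro F
      ext
      simp only [LinearMap.coe_comp, Function.comp_apply, LinearMap.comp_apply,
        LinearMap.toSpanSingleton_apply, one_smul]
      show Delta k (lam * mu) (phiMap k lam (ofF k F))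
        = TensorProduct.map (phiMap k lam) (phiMap k lam) (Delta k mu (ofF k F))
      rw [phiMap_ofF, map_smul, Delta_ofF, Delta_ofF, phi2_DeltaF]
    exact congrFun (congrArg DFunLike.coe h) x

end Moerdijk
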